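/- Let C₁,…,C₅ be five pairwise disjoint maximal commuting Pauli classes in dimension d = 8, and let S be a maximal commuting Pauli class, not equal up to phase (as a set of operators) to any Cᵢ, such that every member of S is equal up to phase to a member of C₁ ∪ ⋯ ∪ C₅. Then there is exactly one index i such that S contains, up to phase, exactly three members of Cᵢ and exactly one member of each Cⱼ with j ≠ i; moreover the three members shared with Cᵢ are of the form U, V, and (up to phase) UV. -/

import Mathlib

open Matrix

noncomputable section

/-- Matrices on the Hilbert space of `n` qubits, with rows and columns indexed by
bit strings `Fin n → Fin 2`. -/
abbrev QMat (n : ℕ) := Matrix (Fin n → Fin 2) (Fin n → Fin 2) ℂ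

/-- The single-qubit identity. -/
def pI : Matrix (Fin 2) (Fin 2) ℂ := 1

/-- The single-qubit Pauli X. -/
def pX : Matrix (Fin 2) (Fin 2) ℂ := !![0, 1; 1, 0]

/-- The single-qubit Pauli Y. -/
def pY : Matrix (Fin 2) (Fin 2) ℂ := !![0, -Complex.I; Complex.I, 0]

/-- The single-qubit Pauli Z. -/
def pZ : Matrix (Fin 2) (Fin 2) ℂ := !![1, 0; 0, -1]

/-- The `n`-fold Kronecker product `W 0 ⊗ ⋯ ⊗ W (n-1)`, realized on indices
`Fin n → Fin 2`. -/
def kron (n : ℕ) (W : Fin n → Matrix (Fin 2) (Fin 2) ℂ) : QMat n :=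
  fun v w => ∏ j, W j (v j) (w j)

/-- `M` is an `n`-qubit Pauli operator: an `n`-fold Kronecker product of matrices
from `{I₂, X, Y, Z}`. -/
def IsPauliOp (n : ℕ) (M : QMat n) : Prop :=
  ∃ W : Fin n → Matrix (Fin 2) (Fin 2) ℂ,
    (∀ j, W j = pI ∨ W j = pX ∨ W j = pY ∨ W j = pZ) ∧ M = kron n W

/-- Two matrices are equal up to phase if one is a nonzero scalar multiple of the other. -/
def PhaseEq {m : Type*} (A B : Matrix m m ℂ) : Prop := ∃ c : ℂ, c ≠ 0 ∧ A = c • B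

/-- A maximal commuting Pauli class in dimension `d = 2 ^ n`: a set of `d - 1`
pairwise commuting non-identity `n`-qubit Pauli operators, pairwise distinct up to phase. -/
def IsMaxClass (n : ℕ) (C : Set (QMat n)) : Prop :=
  C.Finite ∧ C.ncard = 2 ^ n - 1 ∧
  (∀ U ∈ C, IsPauliOp n U ∧ U ≠ 1) ∧
  (∀ U ∈ C, ∀ V ∈ C, U * V = V * U) ∧
  (∀ U ∈ C, ∀ V ∈ C, U ≠ V → ¬ PhaseEq U V)

/-- Two classes are disjoint if no member of one is equal up to phase to a member of the other. -/
def ClassDisjoint {n : ℕ} (C D : Set (QMat n)) : Prop :=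
  ∀ U ∈ C, ∀ V ∈ D, ¬ PhaseEq U V

/-- Two classes are equal up to phase (as sets of operators). -/
def ClassPhaseEq {n : ℕ} (C D : Set (QMat n)) : Prop :=
  (∀ U ∈ C, ∃ V ∈ D, PhaseEq U V) ∧ (∀ V ∈ D, ∃ U ∈ C, PhaseEq U V)

/-- The standard Hermitian inner product on `ι → ℂ` (conjugate-linear in the first slot). -/
def cinner {ι : Type*} [Fintype ι] (x y : ι → ℂ) : ℂ :=
  ∑ k, (starRingEnd ℂ) (x k) * y k

def Four (P : Matrix (Fin 2) (Fin 2) ℂ) : Prop := P = pI ∨ P = pX ∨ P = pY ∨ P = pZ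
lemma pI_eq : pI = !![1,0;0,1] := by
  ext i j; fin_cases i <;> fin_cases j <;> simp [pI, Matrix.one_apply]


/-- Map the bit pair (x,z) to the corresponding Pauli. -/
def pauli : ZMod 2 × ZMod 2 → Matrix (Fin 2) (Fin 2) ℂ :=
  fun v => if v = (0,0) then pI else if v = (1,0) then pX else if v = (1,1) then pY else pZ

lemma pauli00 : pauli (0,0) = pI := by rw [pauli]; norm_num
lemma pauli10 : pauli (1,0) = pX := by
  rw [pauli]; rw [if_neg (by decide), if_pos rfl]
lemma pauli11 : pauli (1,1) = pY := by
  rw [pauli]; rw [if_neg (by decide), if_neg (by decide), if_pos rfl]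
lemma pauli01 : pauli (0,1) = pZ := by
  rw [pauli]; rw [if_neg (by decide), if_neg (by decide), if_neg (by decide)]
lemma pauli_four (v : ZMod 2 × ZMod 2) : Four (pauli v) := by
  unfold Four pauli; split_ifs <;> tauto

open Classical in
/-- The (x,z) bits of a single-qubit Pauli. -/
def bits (P : Matrix (Fin 2) (Fin 2) ℂ) : ZMod 2 × ZMod 2 :=
  (if P = pX ∨ P = pY then 1 else 0, if P = pY ∨ P = pZ then 1 else 0)

lemma dIX : pI ≠ pX := fun h => by
  have := congrFun (congrFun h 0) 0; simp [pI_eq, pX] at this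
lemma dIY : pI ≠ pY := fun h => by
  have := congrFun (congrFun h 0) 0; simp [pI_eq, pY] at this
lemma dIZ : pI ≠ pZ := fun h => by
  have := congrFun (congrFun h 1) 1; simp [pI_eq, pZ, Complex.ext_iff] at this; norm_num at this
lemma dXY : pX ≠ pY := fun h => by
  have := congrFun (congrFun h 0) 1; simp [pX, pY, Complex.ext_iff] at this
lemma dXZ : pX ≠ pZ := fun h => by
  have := congrFun (congrFun h 0) 0; simp [pX, pZ, Complex.ext_iff] at this
lemma dYZ : pY ≠ pZ := fun h => by
  have := congrFun (congrFun h 0) 0; simp [pY, pZ, Complex.ext_iff] at this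

lemma bitsI : bits pI = (0,0) := by simp [bits, dIX, dIY, dIZ]
lemma bitsX : bits pX = (1,0) := by simp [bits, dXY, dXZ, Ne.symm dIX]
lemma bitsY : bits pY = (1,1) := by simp [bits, Ne.symm dXY]
lemma bitsZ : bits pZ = (0,1) := by simp [bits, Ne.symm dIZ, Ne.symm dXZ, Ne.symm dYZ]

lemma pauli_bits (P : Matrix (Fin 2) (Fin 2) ℂ) (hP : Four P) : pauli (bits P) = P := by
  rcases hP with h|h|h|h <;> subst h <;>
    simp only [bitsI, bitsX, bitsY, bitsZ, pauli00, pauli10, pauli11, pauli01]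


lemma trace_four (P Q : Matrix (Fin 2) (Fin 2) ℂ) (hP : Four P) (hQ : Four Q) :
    (P * Q).trace = if P = Q then 2 else 0 := by
  rcases hP with h|h|h|h <;> rcases hQ with g|g|g|g <;> subst h <;> subst g <;>
    simp only [if_pos rfl, if_neg dIX, if_neg dIY, if_neg dIZ, if_neg dXY, if_neg dXZ,
      if_neg dYZ, if_neg (Ne.symm dIX), if_neg (Ne.symm dIY), if_neg (Ne.symm dIZ),
      if_neg (Ne.symm dXY), if_neg (Ne.symm dXZ), if_neg (Ne.symm dYZ)] <;>
    simp [pX, pY, pZ, pI_eq, Matrix.trace, Matrix.mul_apply, Fin.sum_univ_two,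
      Fin.sum_univ_succ, Complex.ext_iff] <;> norm_num

/-- Single-qubit multiplication: product is a phase times the bit-sum Pauli. -/
lemma mul_bits (P Q : Matrix (Fin 2) (Fin 2) ℂ) (hP : Four P) (hQ : Four Q) :
    ∃ c : ℂ, c ≠ 0 ∧ P * Q = c • pauli (bits P + bits Q) := by
  rcases hP with h|h|h|h <;> rcases hQ with g|g|g|g <;> subst h <;> subst g
  · refine ⟨1, one_ne_zero, ?_⟩
    rw [show bits pI + bits pI = (0,0) by simp only [bitsI]; decide, pauli00]
    rw [pI, one_mul, one_smul]
  · refine ⟨1, one_ne_zero, ?_⟩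
    rw [show bits pI + bits pX = (1,0) by rw [bitsI, bitsX]; decide, pauli10]
    rw [pI, one_mul, one_smul]
  · refine ⟨1, one_ne_zero, ?_⟩
    rw [show bits pI + bits pY = (1,1) by rw [bitsI, bitsY]; decide, pauli11]
    rw [pI, one_mul, one_smul]
  · refine ⟨1, one_ne_zero, ?_⟩
    rw [show bits pI + bits pZ = (0,1) by rw [bitsI, bitsZ]; decide, pauli01]
    rw [pI, one_mul, one_smul]
  · refine ⟨1, one_ne_zero, ?_⟩
    rw [show bits pX + bits pI = (1,0) by rw [bitsX, bitsI]; decide, pauli10]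
    rw [pI, mul_one, one_smul]
  · refine ⟨1, one_ne_zero, ?_⟩
    rw [show bits pX + bits pX = (0,0) by simp only [bitsX]; decide, pauli00]
    rw [pI, one_smul]
    ext i j; fin_cases i <;> fin_cases j <;>
      simp [pX, Matrix.mul_apply, Fin.sum_univ_two, Matrix.one_apply] <;> ring_nf <;>
      simp [Complex.I_sq] <;> ring
  · refine ⟨Complex.I, Complex.I_ne_zero, ?_⟩
    rw [show bits pX + bits pY = (0,1) by rw [bitsX, bitsY]; decide, pauli01]
    ext i j; fin_cases i <;> fin_cases j <;>
      simp [pX, pY, pZ, Matrix.mul_apply, Fin.sum_univ_two] <;> ring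
  · refine ⟨(-Complex.I), neg_ne_zero.mpr Complex.I_ne_zero, ?_⟩
    rw [show bits pX + bits pZ = (1,1) by rw [bitsX, bitsZ]; decide, pauli11]
    ext i j; fin_cases i <;> fin_cases j <;>
      simp [pX, pZ, pY, Matrix.mul_apply, Fin.sum_univ_two] <;> ring
  · refine ⟨1, one_ne_zero, ?_⟩
    rw [show bits pY + bits pI = (1,1) by rw [bitsY, bitsI]; decide, pauli11]
    rw [pI, mul_one, one_smul]
  · refine ⟨(-Complex.I), neg_ne_zero.mpr Complex.I_ne_zero, ?_⟩
    rw [show bits pY + bits pX = (0,1) by rw [bitsY, bitsX]; decide, pauli01]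
    ext i j; fin_cases i <;> fin_cases j <;>
      simp [pY, pX, pZ, Matrix.mul_apply, Fin.sum_univ_two] <;> ring
  · refine ⟨1, one_ne_zero, ?_⟩
    rw [show bits pY + bits pY = (0,0) by simp only [bitsY]; decide, pauli00]
    rw [pI, one_smul]
    ext i j; fin_cases i <;> fin_cases j <;>
      simp [pY, Matrix.mul_apply, Fin.sum_univ_two, Matrix.one_apply] <;> ring_nf <;>
      simp [Complex.I_sq] <;> ring
  · refine ⟨Complex.I, Complex.I_ne_zero, ?_⟩
    rw [show bits pY + bits pZ = (1,0) by rw [bitsY, bitsZ]; decide, pauli10]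
    ext i j; fin_cases i <;> fin_cases j <;>
      simp [pY, pZ, pX, Matrix.mul_apply, Fin.sum_univ_two] <;> ring
  · refine ⟨1, one_ne_zero, ?_⟩
    rw [show bits pZ + bits pI = (0,1) by rw [bitsZ, bitsI]; decide, pauli01]
    rw [pI, mul_one, one_smul]
  · refine ⟨Complex.I, Complex.I_ne_zero, ?_⟩
    rw [show bits pZ + bits pX = (1,1) by rw [bitsZ, bitsX]; decide, pauli11]
    ext i j; fin_cases i <;> fin_cases j <;>
      simp [pZ, pX, pY, Matrix.mul_apply, Fin.sum_univ_two] <;> ring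
  · refine ⟨(-Complex.I), neg_ne_zero.mpr Complex.I_ne_zero, ?_⟩
    rw [show bits pZ + bits pY = (1,0) by rw [bitsZ, bitsY]; decide, pauli10]
    ext i j; fin_cases i <;> fin_cases j <;>
      simp [pZ, pY, pX, Matrix.mul_apply, Fin.sum_univ_two] <;> ring
  · refine ⟨1, one_ne_zero, ?_⟩
    rw [show bits pZ + bits pZ = (0,0) by simp only [bitsZ]; decide, pauli00]
    rw [pI, one_smul]
    ext i j; fin_cases i <;> fin_cases j <;>
      simp [pZ, Matrix.mul_apply, Fin.sum_univ_two, Matrix.one_apply] <;> ring_nf <;>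
      simp [Complex.I_sq] <;> ring

/-- symplectic form on one qubit -/
def sig1 (u v : ZMod 2 × ZMod 2) : ZMod 2 := u.1 * v.2 + u.2 * v.1

/-- swap lemma -/
lemma swap_four (P Q : Matrix (Fin 2) (Fin 2) ℂ) (hP : Four P) (hQ : Four Q) :
    Q * P = ((-1 : ℂ) ^ (sig1 (bits P) (bits Q)).val) • (P * Q) := by
  rcases hP with h|h|h|h <;> rcases hQ with g|g|g|g <;> subst h <;> subst g
  · rw [show (sig1 (bits pI) (bits pI)).val = 0 by simp only [bitsI]; decide]
    rw [pow_zero, one_smul]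
    try rw [pI, one_mul, mul_one]
  · rw [show (sig1 (bits pI) (bits pX)).val = 0 by rw [bitsI, bitsX]; decide]
    rw [pow_zero, one_smul]
    try rw [pI, one_mul, mul_one]
  · rw [show (sig1 (bits pI) (bits pY)).val = 0 by rw [bitsI, bitsY]; decide]
    rw [pow_zero, one_smul]
    try rw [pI, one_mul, mul_one]
  · rw [show (sig1 (bits pI) (bits pZ)).val = 0 by rw [bitsI, bitsZ]; decide]
    rw [pow_zero, one_smul]
    try rw [pI, one_mul, mul_one]
  · rw [show (sig1 (bits pX) (bits pI)).val = 0 by rw [bitsX, bitsI]; decide]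
    rw [pow_zero, one_smul]
    try rw [pI, one_mul, mul_one]
  · rw [show (sig1 (bits pX) (bits pX)).val = 0 by simp only [bitsX]; decide]
    rw [pow_zero, one_smul]
  · rw [show (sig1 (bits pX) (bits pY)).val = 1 by rw [bitsX, bitsY]; decide]
    rw [pow_one]
    ext i j; fin_cases i <;> fin_cases j <;>
      simp [pX, pY, Matrix.mul_apply, Fin.sum_univ_two] <;> ring
  · rw [show (sig1 (bits pX) (bits pZ)).val = 1 by rw [bitsX, bitsZ]; decide]
    rw [pow_one]
    ext i j; fin_cases i <;> fin_cases j <;>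
      simp [pX, pZ, Matrix.mul_apply, Fin.sum_univ_two] <;> ring
  · rw [show (sig1 (bits pY) (bits pI)).val = 0 by rw [bitsY, bitsI]; decide]
    rw [pow_zero, one_smul]
    try rw [pI, one_mul, mul_one]
  · rw [show (sig1 (bits pY) (bits pX)).val = 1 by rw [bitsY, bitsX]; decide]
    rw [pow_one]
    ext i j; fin_cases i <;> fin_cases j <;>
      simp [pY, pX, Matrix.mul_apply, Fin.sum_univ_two] <;> ring
  · rw [show (sig1 (bits pY) (bits pY)).val = 0 by simp only [bitsY]; decide]
    rw [pow_zero, one_smul]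
  · rw [show (sig1 (bits pY) (bits pZ)).val = 1 by rw [bitsY, bitsZ]; decide]
    rw [pow_one]
    ext i j; fin_cases i <;> fin_cases j <;>
      simp [pY, pZ, Matrix.mul_apply, Fin.sum_univ_two] <;> ring
  · rw [show (sig1 (bits pZ) (bits pI)).val = 0 by rw [bitsZ, bitsI]; decide]
    rw [pow_zero, one_smul]
    try rw [pI, one_mul, mul_one]
  · rw [show (sig1 (bits pZ) (bits pX)).val = 1 by rw [bitsZ, bitsX]; decide]
    rw [pow_one]
    ext i j; fin_cases i <;> fin_cases j <;>
      simp [pZ, pX, Matrix.mul_apply, Fin.sum_univ_two] <;> ring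
  · rw [show (sig1 (bits pZ) (bits pY)).val = 1 by rw [bitsZ, bitsY]; decide]
    rw [pow_one]
    ext i j; fin_cases i <;> fin_cases j <;>
      simp [pZ, pY, Matrix.mul_apply, Fin.sum_univ_two] <;> ring
  · rw [show (sig1 (bits pZ) (bits pZ)).val = 0 by simp only [bitsZ]; decide]
    rw [pow_zero, one_smul]
lemma kron_mul (n : ℕ) (W W' : Fin n → Matrix (Fin 2) (Fin 2) ℂ) :
    kron n W * kron n W' = kron n (fun j => W j * W' j) := by
  ext v w
  simp only [Matrix.mul_apply, kron]
  simp only [← Finset.prod_mul_distrib]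
  rw [Finset.prod_univ_sum, Fintype.piFinset_univ]

lemma kron_smul (n : ℕ) (c : Fin n → ℂ) (W : Fin n → Matrix (Fin 2) (Fin 2) ℂ) :
    kron n (fun j => c j • W j) = (∏ j, c j) • kron n W := by
  ext v w
  simp only [kron, Matrix.smul_apply, smul_eq_mul]
  rw [← Finset.prod_mul_distrib]

lemma kron_one (n : ℕ) : kron n (fun _ => (1 : Matrix (Fin 2) (Fin 2) ℂ)) = 1 := by
  ext v w
  simp only [kron, Matrix.one_apply]
  rw [Finset.prod_boole]
  simp [funext_iff]

lemma trace_kron (n : ℕ) (W : Fin n → Matrix (Fin 2) (Fin 2) ℂ) :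
    (kron n W).trace = ∏ j, (W j).trace := by
  simp only [Matrix.trace, Matrix.diag, kron]
  rw [Finset.prod_univ_sum, Fintype.piFinset_univ]

abbrev PV := Fin 3 → ZMod 2 × ZMod 2
def FourStr (W : Fin 3 → Matrix (Fin 2) (Fin 2) ℂ) : Prop := ∀ j, Four (W j)
def vecW (W : Fin 3 → Matrix (Fin 2) (Fin 2) ℂ) : PV := fun j => bits (W j)

lemma isPauliOp_iff (M : QMat 3) : IsPauliOp 3 M ↔ ∃ W, FourStr W ∧ M = kron 3 W := Iff.rfl

lemma bits_pauli (v : ZMod 2 × ZMod 2) : bits (pauli v) = v := by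
  obtain ⟨a, b⟩ := v
  fin_cases a <;> fin_cases b
  · exact (congrArg bits pauli00).trans bitsI
  · exact (congrArg bits pauli01).trans bitsZ
  · exact (congrArg bits pauli10).trans bitsX
  · exact (congrArg bits pauli11).trans bitsY

lemma kron_phase_inj (W W' : Fin 3 → Matrix (Fin 2) (Fin 2) ℂ) (hW : FourStr W)
    (hW' : FourStr W') (c : ℂ) (hc : c ≠ 0) (h : kron 3 W = c • kron 3 W') :
    W = W' ∧ c = 1 := by
  have key : ∀ (U U' : Fin 3 → Matrix (Fin 2) (Fin 2) ℂ), FourStr U → FourStr U' →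
      (kron 3 U * kron 3 U').trace = ∏ j, (if U j = U' j then (2:ℂ) else 0) := by
    intro U U' hU hU'
    rw [kron_mul, trace_kron]
    exact Finset.prod_congr rfl fun j _ => trace_four _ _ (hU j) (hU' j)
  have h8 : (kron 3 W' * kron 3 W').trace = 8 := by
    rw [key W' W' hW' hW']; simp; norm_num
  have hWW' : (kron 3 W * kron 3 W').trace = c * 8 := by
    rw [h, Matrix.smul_mul, Matrix.trace_smul, h8, smul_eq_mul]
  have heq : W = W' := by
    by_contra hne
    have : ∃ j, W j ≠ W' j := by
      by_contra hall; push_neg at hall; exact hne (funext hall)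
    obtain ⟨j0, hj0⟩ := this
    have : (kron 3 W * kron 3 W').trace = 0 := by
      rw [key W W' hW hW']
      exact Finset.prod_eq_zero (Finset.mem_univ j0) (by simp [hj0])
    rw [hWW'] at this
    simp at this
    exact absurd this hc
  refine ⟨heq, ?_⟩
  subst heq
  have hc8 : c * 8 = 8 := hWW'.symm.trans h8
  have h8ne : (8 : ℂ) ≠ 0 := by norm_num
  field_simp at hc8
  exact hc8

lemma kron_ne_zero (W : Fin 3 → Matrix (Fin 2) (Fin 2) ℂ) (hW : FourStr W) :
    kron 3 W ≠ 0 := by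
  intro h
  have : (kron 3 W * kron 3 W).trace = 8 := by
    rw [kron_mul, trace_kron]
    rw [Finset.prod_congr rfl fun j _ => trace_four _ _ (hW j) (hW j)]
    simp; norm_num
  rw [h] at this; simp at this

open Classical in
def vec (M : QMat 3) : PV :=
  if h : IsPauliOp 3 M then vecW h.choose else 0

lemma vec_kron (W : Fin 3 → Matrix (Fin 2) (Fin 2) ℂ) (hW : FourStr W) :
    _root_.vec (kron 3 W) = vecW W := by
  have hp : IsPauliOp 3 (kron 3 W) := ⟨W, hW, rfl⟩
  rw [_root_.vec, dif_pos hp]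
  obtain ⟨hf, he⟩ := hp.choose_spec
  have := kron_phase_inj hp.choose W hf hW 1 one_ne_zero (by rw [one_smul, ← he])
  rw [this.1]

lemma pauli_rep (M : QMat 3) (hM : IsPauliOp 3 M) :
    ∃ W, FourStr W ∧ M = kron 3 W ∧ vecW W = _root_.vec M := by
  obtain ⟨W, hW, he⟩ := hM
  exact ⟨W, hW, he, by rw [he, vec_kron W hW]⟩

lemma vec_inj (M N : QMat 3) (hM : IsPauliOp 3 M) (hN : IsPauliOp 3 N)
    (h : _root_.vec M = _root_.vec N) : M = N := by
  obtain ⟨W, hW, rfl, hv⟩ := pauli_rep M hM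
  obtain ⟨W', hW', rfl, hv'⟩ := pauli_rep N hN
  have : W = W' := by
    funext j
    have hb : bits (W j) = bits (W' j) := by
      have : vecW W = vecW W' := by rw [hv, hv', h]
      exact congrFun this j
    rw [← pauli_bits (W j) (hW j), ← pauli_bits (W' j) (hW' j), hb]
  rw [this]

lemma phaseEq_iff (M N : QMat 3) (hM : IsPauliOp 3 M) (hN : IsPauliOp 3 N) :
    PhaseEq M N ↔ _root_.vec M = _root_.vec N := by
  constructor
  · rintro ⟨c, hc, he⟩
    obtain ⟨W, hW, rfl, hv⟩ := pauli_rep M hM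
    obtain ⟨W', hW', rfl, hv'⟩ := pauli_rep N hN
    have := (kron_phase_inj W W' hW hW' c hc he).1
    rw [← hv, ← hv', this]
  · intro h
    rw [vec_inj M N hM hN h]
    exact ⟨1, one_ne_zero, (one_smul _ _).symm⟩

lemma isPauliOp_one : IsPauliOp 3 (1 : QMat 3) :=
  ⟨fun _ => pI, fun _ => Or.inl rfl, by rw [show (fun (_ : Fin 3) => pI) = fun _ => (1 : Matrix (Fin 2) (Fin 2) ℂ) from rfl, kron_one]⟩

lemma vec_one : _root_.vec (1 : QMat 3) = 0 := by
  have : (1 : QMat 3) = kron 3 (fun _ => pI) := by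
    rw [show (fun (_ : Fin 3) => pI) = fun _ => (1 : Matrix (Fin 2) (Fin 2) ℂ) from rfl, kron_one]
  rw [this, vec_kron _ (fun _ => Or.inl rfl)]
  funext j
  rw [vecW, bitsI]
  rfl

lemma vec_ne_zero (M : QMat 3) (hM : IsPauliOp 3 M) (h1 : M ≠ 1) : _root_.vec M ≠ 0 := by
  intro h
  exact h1 (vec_inj M 1 hM isPauliOp_one (by rw [h, vec_one]))

/-- product of two Pauli ops is a phase times a Pauli op with summed vector -/
lemma mul_pauli (M N : QMat 3) (hM : IsPauliOp 3 M) (hN : IsPauliOp 3 N) :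
    ∃ P, IsPauliOp 3 P ∧ _root_.vec P = _root_.vec M + _root_.vec N ∧ ∃ c : ℂ, c ≠ 0 ∧ M * N = c • P := by
  obtain ⟨W, hW, rfl, hv⟩ := pauli_rep M hM
  obtain ⟨W', hW', rfl, hv'⟩ := pauli_rep N hN
  choose c hc hPQ using fun j => mul_bits (W j) (W' j) (hW j) (hW' j)
  refine ⟨kron 3 (fun j => pauli (bits (W j) + bits (W' j))), ⟨_, fun j => pauli_four _, rfl⟩, ?_, ∏ j, c j, Finset.prod_ne_zero_iff.2 fun j _ => hc j, ?_⟩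
  · rw [vec_kron _ (fun j => pauli_four _), ← hv, ← hv']
    funext j
    rw [vecW, bits_pauli]
    rfl
  · rw [kron_mul]
    rw [show (fun j => W j * W' j) = fun j => c j • pauli (bits (W j) + bits (W' j)) from funext hPQ]
    exact kron_smul 3 c _

/-- the symplectic form -/
def Bform (u v : PV) : ZMod 2 := ∑ j, sig1 (u j) (v j)

lemma comm_Bform (M N : QMat 3) (hM : IsPauliOp 3 M) (hN : IsPauliOp 3 N)
    (hc : M * N = N * M) : Bform (_root_.vec M) (_root_.vec N) = 0 := by
  obtain ⟨W, hW, rfl, hv⟩ := pauli_rep M hM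
  obtain ⟨W', hW', rfl, hv'⟩ := pauli_rep N hN
  have hswap : kron 3 W' * kron 3 W
      = ((-1 : ℂ) ^ (∑ j, (sig1 (bits (W j)) (bits (W' j))).val)) • (kron 3 W * kron 3 W') := by
    rw [kron_mul, kron_mul (n := 3) W W']
    rw [show (fun j => W' j * W j)
        = fun j => ((-1 : ℂ) ^ (sig1 (bits (W j)) (bits (W' j))).val) • (W j * W' j) from
      funext fun j => swap_four (W j) (W' j) (hW j) (hW' j)]
    rw [← kron_mul, kron_smul, kron_mul, Finset.prod_pow_eq_pow_sum]
  have hne : kron 3 W * kron 3 W' ≠ 0 := by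
    obtain ⟨P, hP, _, c, hc0, he⟩ := mul_pauli (kron 3 W) (kron 3 W') ⟨W, hW, rfl⟩ ⟨W', hW', rfl⟩
    obtain ⟨WP, hWP, rfl⟩ := hP
    rw [he]
    exact smul_ne_zero hc0 (kron_ne_zero WP hWP)
  rw [← hc] at hswap
  have hone : ((-1 : ℂ) ^ (∑ j, (sig1 (bits (W j)) (bits (W' j))).val)) = 1 := by
    by_contra hne1
    have : ((-1 : ℂ) ^ (∑ j, (sig1 (bits (W j)) (bits (W' j))).val)) = -1 := by
      rcases neg_one_pow_eq_or ℂ (∑ j, (sig1 (bits (W j)) (bits (W' j))).val) with h|h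
      · exact absurd h hne1
      · exact h
    rw [this] at hswap
    have h2 : (2 : ℂ) • (kron 3 W * kron 3 W') = 0 := by
      have := hswap
      rw [neg_smul, one_smul] at this
      have : kron 3 W * kron 3 W' + kron 3 W * kron 3 W' = 0 := by
        nth_rewrite 1 [this]; exact neg_add_cancel _
      rw [two_smul]; exact this
    have := smul_eq_zero.1 h2
    rcases this with h|h
    · norm_num at h
    · exact hne h
  have heven : Even (∑ j, (sig1 (bits (W j)) (bits (W' j))).val) := by
    rw [← neg_one_pow_eq_one_iff_even (R := ℂ) (by norm_num)]
    exact hone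
  have hcast : ((∑ j, (sig1 (bits (W j)) (bits (W' j))).val : ℕ) : ZMod 2) = 0 := by
    obtain ⟨k, hk⟩ := heven
    rw [hk, Nat.cast_add]
    rw [show ((k:ZMod 2) + (k:ZMod 2)) = 2 * (k:ZMod 2) by ring]
    rw [show (2 : ZMod 2) = 0 from rfl, zero_mul]
  rw [Bform, ← hv, ← hv']
  rw [Nat.cast_sum] at hcast
  simp only [ZMod.natCast_val, ZMod.cast_id] at hcast
  exact hcast

section D2
open Module



def Bb : LinearMap.BilinForm (ZMod 2) PV :=
  LinearMap.mk₂ (ZMod 2) Bform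
    (fun a b c => by
      simp only [Bform, sig1, Pi.add_apply, Prod.fst_add, Prod.snd_add, ← Finset.sum_add_distrib]
      exact Finset.sum_congr rfl fun j _ => by ring)
    (fun c a b => by
      simp only [Bform, sig1, Pi.smul_apply, Prod.smul_fst, Prod.smul_snd, smul_eq_mul,
        Finset.mul_sum]
      exact Finset.sum_congr rfl fun j _ => by ring)
    (fun a b c => by
      simp only [Bform, sig1, Pi.add_apply, Prod.fst_add, Prod.snd_add, ← Finset.sum_add_distrib]
      exact Finset.sum_congr rfl fun j _ => by ring)
    (fun c a b => by
      simp only [Bform, sig1, Pi.smul_apply, Prod.smul_fst, Prod.smul_snd, smul_eq_mul,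
        Finset.mul_sum]
      exact Finset.sum_congr rfl fun j _ => by ring)

lemma Bb_apply (u v : PV) : Bb u v = Bform u v := rfl

lemma Bb_symm (u v : PV) : Bform u v = Bform v u := by
  exact Finset.sum_congr rfl fun j _ => by rw [sig1, sig1]; ring

lemma Bb_refl : Bb.IsRefl := fun u v h => by rwa [Bb_apply, Bb_symm, ← Bb_apply]

lemma Bb_nondeg : Bb.Nondegenerate := by
  refine (LinearMap.IsRefl.nondegenerate_iff_separatingLeft Bb_refl).2 ?_
  intro u h
  by_contra hu
  have : ∃ j, u j ≠ 0 := by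
    by_contra hall; push_neg at hall; exact hu (funext hall)
  obtain ⟨j, hj⟩ := this
  have h1 : (u j).1 ≠ 0 ∨ (u j).2 ≠ 0 := by
    by_contra hb; push_neg at hb
    exact hj (Prod.ext hb.1 hb.2)
  have key : ∀ w : ZMod 2 × ZMod 2, Bform u (Pi.single j w) = sig1 (u j) w := by
    intro w
    rw [Bform]
    rw [Finset.sum_eq_single_of_mem j (Finset.mem_univ j)]
    · rw [Pi.single_eq_same]
    · intro k _ hk
      rw [Pi.single_eq_of_ne hk, sig1]
      simp
  rcases h1 with h1 | h1
  · have := h (Pi.single j (0,1))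
    rw [Bb_apply, key, sig1] at this
    simp at this
    exact h1 this
  · have := h (Pi.single j (1,0))
    rw [Bb_apply, key, sig1] at this
    simp at this
    exact h1 this

lemma finrank_PV : finrank (ZMod 2) PV = 6 := by
  simp [finrank_pi_fintype, finrank_prod]  -- guess names
lemma card_sub (D : Submodule (ZMod 2) PV) :
    (D : Set PV).ncard = 2 ^ finrank (ZMod 2) D := by
  haveI : Fintype ↥D := Fintype.ofFinite _
  rw [← Nat.card_coe_set_eq, SetLike.coe_sort_coe, Nat.card_eq_fintype_card]
  rw [Module.card_eq_pow_finrank (K := ZMod 2) (V := ↥D), ZMod.card]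

lemma span_isotropic (A : Set PV) (hB : ∀ x ∈ A, ∀ y ∈ A, Bform x y = 0) :
    ∀ x ∈ Submodule.span (ZMod 2) A, ∀ y ∈ Submodule.span (ZMod 2) A, Bform x y = 0 := by
  intro x hx y hy
  rw [← Bb_apply]
  induction hx, hy using Submodule.span_induction₂ with
  | mem_mem u v hu hv => rw [Bb_apply]; exact hB u hu v hv
  | zero_left v _ => simp
  | zero_right u _ => simp
  | add_left u v w _ _ _ h1 h2 => simp [h1, h2]
  | add_right u v w _ _ _ h1 h2 => simp [h1, h2]
  | smul_left c u v _ _ h => simp [h]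
  | smul_right c u v _ _ h => simp [h]

lemma finrank_span_le (A : Set PV) (hB : ∀ x ∈ A, ∀ y ∈ A, Bform x y = 0) :
    finrank (ZMod 2) (Submodule.span (ZMod 2) A) ≤ 3 := by
  set W := Submodule.span (ZMod 2) A
  have hle : W ≤ Bb.orthogonal W := by
    intro x hx
    rw [LinearMap.BilinForm.mem_orthogonal_iff]
    intro y hy
    rw [Bb_apply]
    exact span_isotropic A hB y hy x hx
  have h1 : finrank (ZMod 2) W ≤ finrank (ZMod 2) (Bb.orthogonal W) :=
    Submodule.finrank_mono hle
  have h2 : finrank (ZMod 2) (Bb.orthogonal W) = finrank (ZMod 2) PV - finrank (ZMod 2) W :=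
    LinearMap.BilinForm.finrank_orthogonal Bb_nondeg W
  rw [h2, finrank_PV] at h1
  omega

/-- main structure lemma for a 7-element isotropic family -/
lemma seven_structure (A : Set PV) (hcard : A.ncard = 7) (h0 : (0:PV) ∉ A)
    (hB : ∀ x ∈ A, ∀ y ∈ A, Bform x y = 0) :
    A = (Submodule.span (ZMod 2) A : Set PV) \ {0} ∧
    finrank (ZMod 2) (Submodule.span (ZMod 2) A) = 3 := by
  set W := Submodule.span (ZMod 2) A with hW
  have hsub : A ⊆ (W : Set PV) \ {0} := by
    intro x hx
    exact ⟨Submodule.subset_span hx, by rintro rfl; exact h0 hx⟩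
  have hk : finrank (ZMod 2) W ≤ 3 := finrank_span_le A hB
  have hfin : ((W : Set PV) \ {0}).Finite := Set.Finite.diff (Set.toFinite _)
  have hcardW : ((W : Set PV) \ {0}).ncard = 2 ^ finrank (ZMod 2) W - 1 := by
    rw [Set.ncard_diff_singleton_of_mem (by simp [W.zero_mem]), card_sub]
  have hle7 : ((W : Set PV) \ {0}).ncard ≤ 7 := by
    rw [hcardW]
    have : (2:ℕ) ^ finrank (ZMod 2) W ≤ 8 := by
      calc (2:ℕ) ^ finrank (ZMod 2) W ≤ 2 ^ 3 := Nat.pow_le_pow_right (by norm_num) hk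
      _ = 8 := by norm_num
    omega
  have heq : A = (W : Set PV) \ {0} :=
    Set.eq_of_subset_of_ncard_le hsub (by rw [hcard]; exact hle7) hfin
  refine ⟨heq, ?_⟩
  have : ((W : Set PV) \ {0}).ncard = 7 := by rw [← heq, hcard]
  rw [hcardW] at this
  interval_cases h : finrank (ZMod 2) W <;> omega

lemma inter_sub (P Q : Submodule (ZMod 2) PV) :
    ((P : Set PV) \ {0}) ∩ ((Q : Set PV) \ {0}) = ((P ⊓ Q : Submodule (ZMod 2) PV) : Set PV) \ {0} := by
  ext x
  simp only [Set.mem_inter_iff, Set.mem_diff, SetLike.mem_coe, Submodule.mem_inf,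
    Set.mem_singleton_iff]
  tauto

end D2

lemma count_aux (a0 a1 a2 a3 a4 : ℕ) (hsum : a0 + a1 + a2 + a3 + a4 = 7)
    (h0 : a0 ≤ 3 ∧ a0 ≠ 2) (h1 : a1 ≤ 3 ∧ a1 ≠ 2) (h2 : a2 ≤ 3 ∧ a2 ≠ 2)
    (h3 : a3 ≤ 3 ∧ a3 ≠ 2) (h4 : a4 ≤ 3 ∧ a4 ≠ 2)
    (n01 : a0 + a1 ≤ 4) (n02 : a0 + a2 ≤ 4) (n03 : a0 + a3 ≤ 4)
    (n04 : a0 + a4 ≤ 4) (n12 : a1 + a2 ≤ 4) (n13 : a1 + a3 ≤ 4)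
    (n14 : a1 + a4 ≤ 4) (n23 : a2 + a3 ≤ 4) (n24 : a2 + a4 ≤ 4)
    (n34 : a3 + a4 ≤ 4) :
    (a0 = 3 ∧ a1 = 1 ∧ a2 = 1 ∧ a3 = 1 ∧ a4 = 1) ∨
    (a1 = 3 ∧ a0 = 1 ∧ a2 = 1 ∧ a3 = 1 ∧ a4 = 1) ∨
    (a2 = 3 ∧ a0 = 1 ∧ a1 = 1 ∧ a3 = 1 ∧ a4 = 1) ∨
    (a3 = 3 ∧ a0 = 1 ∧ a1 = 1 ∧ a2 = 1 ∧ a4 = 1) ∨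
    (a4 = 3 ∧ a0 = 1 ∧ a1 = 1 ∧ a2 = 1 ∧ a3 = 1) := by
  have key : a0 = 3 ∨ a1 = 3 ∨ a2 = 3 ∨ a3 = 3 ∨ a4 = 3 := by omega
  rcases key with a|a|a|a|a
  · left; omega
  · right; left; omega
  · right; right; left; omega
  · right; right; right; left; omega
  · right; right; right; right; omega

lemma count_lemma (m : Fin 5 → ℕ) (hsum : m 0 + m 1 + m 2 + m 3 + m 4 = 7)
    (hval : ∀ i, m i = 0 ∨ m i = 1 ∨ m i = 3)
    (h33 : ∀ i j, i ≠ j → ¬(m i = 3 ∧ m j = 3)) :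
    ∃ i, m i = 3 ∧ ∀ j, j ≠ i → m j = 1 := by
  have hv : ∀ i, m i ≤ 3 ∧ m i ≠ 2 := fun i => by rcases hval i with h|h|h <;> omega
  have hn : ∀ i j, i ≠ j → m i + m j ≤ 4 := by
    intro i j hij
    have := h33 i j hij
    rcases hval i with h|h|h <;> rcases hval j with g|g|g <;> omega
  have key := count_aux (m 0) (m 1) (m 2) (m 3) (m 4) hsum (hv 0) (hv 1) (hv 2) (hv 3) (hv 4)
    (hn 0 1 (by decide)) (hn 0 2 (by decide)) (hn 0 3 (by decide)) (hn 0 4 (by decide))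
    (hn 1 2 (by decide)) (hn 1 3 (by decide)) (hn 1 4 (by decide)) (hn 2 3 (by decide))
    (hn 2 4 (by decide)) (hn 3 4 (by decide))
  rcases key with ⟨a,b,c,d,e⟩|⟨a,b,c,d,e⟩|⟨a,b,c,d,e⟩|⟨a,b,c,d,e⟩|⟨a,b,c,d,e⟩
  · exact ⟨0, a, fun j hj => by fin_cases j <;> simp_all⟩
  · exact ⟨1, a, fun j hj => by fin_cases j <;> simp_all⟩
  · exact ⟨2, a, fun j hj => by fin_cases j <;> simp_all⟩
  · exact ⟨3, a, fun j hj => by fin_cases j <;> simp_all⟩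
  · exact ⟨4, a, fun j hj => by fin_cases j <;> simp_all⟩


lemma phaseEq_symm {m : Type*} {A B : Matrix m m ℂ} (h : PhaseEq A B) : PhaseEq B A := by
  obtain ⟨c, hc, rfl⟩ := h
  exact ⟨c⁻¹, inv_ne_zero hc, by rw [smul_smul, inv_mul_cancel₀ hc, one_smul]⟩
lemma phaseEq_trans {m : Type*} {A B D : Matrix m m ℂ} (h1 : PhaseEq A B) (h2 : PhaseEq B D) :
    PhaseEq A D := by
  obtain ⟨c, hc, rfl⟩ := h2
  obtain ⟨d, hd, rfl⟩ := h1
  exact ⟨d * c, mul_ne_zero hd hc, by rw [smul_smul]⟩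

lemma pow_cases (k : ℕ) (hb : k ≤ 2) : 2^k - 1 = 0 ∨ 2^k - 1 = 1 ∨ 2^k - 1 = 3 := by
  interval_cases k <;> simp
lemma pow_eq3 (k : ℕ) (hb : k ≤ 2) (h : 2^k - 1 = 3) : k = 2 := by
  interval_cases k <;> simp_all

section MainProof
open Module


/-- If `T` is a maximal commuting Pauli class, not equal up to phase to any
of five pairwise disjoint maximal commuting Pauli classes `C 0, …, C 4` in `d = 8`, all of
whose members are equal up to phase to members of `C 0 ∪ ⋯ ∪ C 4`, then there is exactly
one index `i` such that `T` shares (up to phase) exactly three members with `C i` and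
exactly one with each `C j`, `j ≠ i`; the three shared members are `U`, `V`, and (up to
phase) `U * V`. -/
theorem extra_class_structure_d8 (C : Fin 5 → Set (QMat 3))
    (hmax : ∀ i, IsMaxClass 3 (C i))
    (hdisj : ∀ i j, i ≠ j → ClassDisjoint (C i) (C j))
    (T : Set (QMat 3)) (hT : IsMaxClass 3 T)
    (hne : ∀ i, ¬ ClassPhaseEq T (C i))
    (hsub : ∀ U ∈ T, ∃ i, ∃ V ∈ C i, PhaseEq U V) :
    (∃! i : Fin 5,
      ({x ∈ T | ∃ y ∈ C i, PhaseEq x y}).ncard = 3 ∧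
      (∀ j, j ≠ i → ({x ∈ T | ∃ y ∈ C j, PhaseEq x y}).ncard = 1)) ∧
    (∀ i : Fin 5,
      (({x ∈ T | ∃ y ∈ C i, PhaseEq x y}).ncard = 3 ∧
        (∀ j, j ≠ i → ({x ∈ T | ∃ y ∈ C j, PhaseEq x y}).ncard = 1)) →
      ∃ U V W : QMat 3, {x ∈ T | ∃ y ∈ C i, PhaseEq x y} = {U, V, W} ∧
        PhaseEq W (U * V)) := by
  classical
  have classFacts : ∀ D : Set (QMat 3), IsMaxClass 3 D →
      Set.InjOn _root_.vec D ∧ (_root_.vec '' D).ncard = 7 ∧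
      (_root_.vec '' D) = (Submodule.span (ZMod 2) (_root_.vec '' D) : Set PV) \ {0} ∧
      finrank (ZMod 2) (Submodule.span (ZMod 2) (_root_.vec '' D)) = 3 := by
    intro D hD
    obtain ⟨hfin, hcard, hp, hcomm, hph⟩ := hD
    have hinj : Set.InjOn _root_.vec D := by
      intro x hx y hy hxy
      by_contra hneq
      exact hph x hx y hy hneq ((phaseEq_iff x y (hp x hx).1 (hp y hy).1).2 hxy)
    have hA7 : (_root_.vec '' D).ncard = 7 := by
      rw [Set.ncard_image_of_injOn hinj, hcard]; norm_num
    have h0 : (0:PV) ∉ _root_.vec '' D := by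
      rintro ⟨x, hx, hx0⟩
      exact vec_ne_zero x (hp x hx).1 (hp x hx).2 hx0
    have hBz : ∀ a ∈ _root_.vec '' D, ∀ b ∈ _root_.vec '' D, Bform a b = 0 := by
      rintro a ⟨x, hx, rfl⟩ b ⟨y, hy, rfl⟩
      exact comm_Bform x y (hp x hx).1 (hp y hy).1 (hcomm x hx y hy)
    obtain ⟨heq, hrk⟩ := seven_structure _ hA7 h0 hBz
    exact ⟨hinj, hA7, heq, hrk⟩
  obtain ⟨hTinj, hT7, hTspan, hTrk⟩ := classFacts T hT
  have hCf := fun i => classFacts (C i) (hmax i)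
  have hTpauli : ∀ x ∈ T, IsPauliOp 3 x := fun x hx => (hT.2.2.1 x hx).1
  have hCpauli : ∀ i, ∀ y ∈ C i, IsPauliOp 3 y := fun i y hy => ((hmax i).2.2.1 y hy).1
  -- image of the shared set
  have hSim : ∀ i, _root_.vec '' {x ∈ T | ∃ y ∈ C i, PhaseEq x y} = (_root_.vec '' T) ∩ (_root_.vec '' (C i)) := by
    intro i
    ext a
    constructor
    · rintro ⟨x, ⟨hxT, y, hy, hxy⟩, rfl⟩
      exact ⟨⟨x, hxT, rfl⟩, ⟨y, hy,
        ((phaseEq_iff x y (hTpauli x hxT) (hCpauli i y hy)).1 hxy).symm⟩⟩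
    · rintro ⟨⟨x, hxT, rfl⟩, ⟨y, hy, hxy⟩⟩
      exact ⟨x, ⟨hxT, y, hy, (phaseEq_iff _ _ (hTpauli x hxT) (hCpauli i y hy)).2 hxy.symm⟩, rfl⟩
  have hint : ∀ i, (_root_.vec '' T) ∩ (_root_.vec '' (C i)) =
      ((Submodule.span (ZMod 2) (_root_.vec '' T) ⊓ Submodule.span (ZMod 2) (_root_.vec '' (C i)) :
        Submodule (ZMod 2) PV) : Set PV) \ {0} := by
    intro i
    rw [← inter_sub, ← hTspan, ← (hCf i).2.2.1]
  have hm : ∀ i, ({x ∈ T | ∃ y ∈ C i, PhaseEq x y}).ncard =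
      2 ^ finrank (ZMod 2) (Submodule.span (ZMod 2) (_root_.vec '' T) ⊓
        Submodule.span (ZMod 2) (_root_.vec '' (C i)) : Submodule (ZMod 2) PV) - 1 := by
    intro i
    rw [← Set.ncard_image_of_injOn (hTinj.mono (Set.sep_subset _ _)), hSim i, hint i,
      Set.ncard_diff_singleton_of_mem (by simp), card_sub]
  -- rank bound
  have hrkle : ∀ i, finrank (ZMod 2) (Submodule.span (ZMod 2) (_root_.vec '' T) ⊓
      Submodule.span (ZMod 2) (_root_.vec '' (C i)) : Submodule (ZMod 2) PV) ≤ 2 := by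
    intro i
    by_contra hgt
    push_neg at hgt
    have hle3 : finrank (ZMod 2) (Submodule.span (ZMod 2) (_root_.vec '' T) ⊓
        Submodule.span (ZMod 2) (_root_.vec '' (C i)) : Submodule (ZMod 2) PV) ≤ 3 :=
      le_trans (Submodule.finrank_mono inf_le_left) (le_of_eq hTrk)
    have h3 : finrank (ZMod 2) (Submodule.span (ZMod 2) (_root_.vec '' T) ⊓
        Submodule.span (ZMod 2) (_root_.vec '' (C i)) : Submodule (ZMod 2) PV) = 3 := by omega
    have h1 : (Submodule.span (ZMod 2) (_root_.vec '' T) ⊓ Submodule.span (ZMod 2) (_root_.vec '' (C i)) :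
        Submodule (ZMod 2) PV) = Submodule.span (ZMod 2) (_root_.vec '' T) :=
      Submodule.eq_of_le_of_finrank_le inf_le_left (by rw [h3, hTrk])
    have h2 : Submodule.span (ZMod 2) (_root_.vec '' T) ≤ Submodule.span (ZMod 2) (_root_.vec '' (C i)) := by
      rw [← h1]; exact inf_le_right
    have h4 : Submodule.span (ZMod 2) (_root_.vec '' T) = Submodule.span (ZMod 2) (_root_.vec '' (C i)) :=
      Submodule.eq_of_le_of_finrank_le h2 (by rw [(hCf i).2.2.2, hTrk])
    have himg : _root_.vec '' T = _root_.vec '' (C i) := by rw [hTspan, (hCf i).2.2.1, h4]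
    apply hne i
    constructor
    · intro U hU
      have : _root_.vec U ∈ _root_.vec '' (C i) := by rw [← himg]; exact ⟨U, hU, rfl⟩
      obtain ⟨V, hV, hVU⟩ := this
      exact ⟨V, hV, (phaseEq_iff _ _ (hTpauli U hU) (hCpauli i V hV)).2 hVU.symm⟩
    · intro V hV
      have : _root_.vec V ∈ _root_.vec '' T := by rw [himg]; exact ⟨V, hV, rfl⟩
      obtain ⟨U, hU, hUV⟩ := this
      exact ⟨U, hU, (phaseEq_iff _ _ (hTpauli U hU) (hCpauli i V hV)).2 hUV⟩
  have hval : ∀ i, ({x ∈ T | ∃ y ∈ C i, PhaseEq x y}).ncard = 0 ∨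
      ({x ∈ T | ∃ y ∈ C i, PhaseEq x y}).ncard = 1 ∨
      ({x ∈ T | ∃ y ∈ C i, PhaseEq x y}).ncard = 3 := by
    intro i
    rw [hm i]
    exact pow_cases _ (hrkle i)
  -- class-level disjointness
  have hWbot : ∀ i j, i ≠ j →
      (Submodule.span (ZMod 2) (_root_.vec '' (C i)) ⊓ Submodule.span (ZMod 2) (_root_.vec '' (C j)) :
        Submodule (ZMod 2) PV) = ⊥ := by
    intro i j hij
    rw [eq_bot_iff]
    intro v hv
    rw [Submodule.mem_bot]
    by_contra hv0
    have hvi : v ∈ _root_.vec '' (C i) := by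
      rw [(hCf i).2.2.1]
      exact ⟨(Submodule.mem_inf.1 hv).1, by simpa using hv0⟩
    have hvj : v ∈ _root_.vec '' (C j) := by
      rw [(hCf j).2.2.1]
      exact ⟨(Submodule.mem_inf.1 hv).2, by simpa using hv0⟩
    obtain ⟨x, hx, hxv⟩ := hvi
    obtain ⟨y, hy, hyv⟩ := hvj
    exact hdisj i j hij x hx y hy
      ((phaseEq_iff _ _ (hCpauli i x hx) (hCpauli j y hy)).2 (by rw [hxv, hyv]))
  -- no two 3s
  have hrk2 : ∀ k, ({x ∈ T | ∃ y ∈ C k, PhaseEq x y}).ncard = 3 →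
      finrank (ZMod 2) (Submodule.span (ZMod 2) (_root_.vec '' T) ⊓
        Submodule.span (ZMod 2) (_root_.vec '' (C k)) : Submodule (ZMod 2) PV) = 2 := by
    intro k h3
    exact pow_eq3 _ (hrkle k) ((hm k).symm.trans h3)
  have h33 : ∀ i j, i ≠ j → ¬(({x ∈ T | ∃ y ∈ C i, PhaseEq x y}).ncard = 3 ∧
      ({x ∈ T | ∃ y ∈ C j, PhaseEq x y}).ncard = 3) := by
    rintro i j hij ⟨h3i, h3j⟩
    have hdi := hrk2 i h3i
    have hdj := hrk2 j h3j
    set Di := (Submodule.span (ZMod 2) (_root_.vec '' T) ⊓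
      Submodule.span (ZMod 2) (_root_.vec '' (C i)) : Submodule (ZMod 2) PV) with hDi
    set Dj := (Submodule.span (ZMod 2) (_root_.vec '' T) ⊓
      Submodule.span (ZMod 2) (_root_.vec '' (C j)) : Submodule (ZMod 2) PV) with hDj
    have hinfbot : Di ⊓ Dj = ⊥ := by
      rw [eq_bot_iff, ← hWbot i j hij]
      intro v hv
      exact Submodule.mem_inf.2 ⟨(Submodule.mem_inf.1 (Submodule.mem_inf.1 hv).1).2,
        (Submodule.mem_inf.1 (Submodule.mem_inf.1 hv).2).2⟩
    have hsuple : Di ⊔ Dj ≤ Submodule.span (ZMod 2) (_root_.vec '' T) :=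
      sup_le inf_le_left inf_le_left
    have hsup3 : finrank (ZMod 2) (Di ⊔ Dj : Submodule (ZMod 2) PV) ≤ 3 :=
      le_trans (Submodule.finrank_mono hsuple) (le_of_eq hTrk)
    have hkey := Submodule.finrank_sup_add_finrank_inf_eq Di Dj
    rw [hinfbot, finrank_bot, hdi, hdj] at hkey
    omega
  -- disjointness & cover of T
  have hpairwise : ∀ i j, i ≠ j → Disjoint {x ∈ T | ∃ y ∈ C i, PhaseEq x y}
      {x ∈ T | ∃ y ∈ C j, PhaseEq x y} := by
    intro i j hij
    rw [Set.disjoint_left]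
    rintro x ⟨hxT, y, hy, hxy⟩ ⟨_, z, hz, hxz⟩
    exact hdisj i j hij y hy z hz (phaseEq_trans (phaseEq_symm hxy) hxz)
  have hfinS : ∀ i, ({x ∈ T | ∃ y ∈ C i, PhaseEq x y}).Finite :=
    fun i => hT.1.subset (Set.sep_subset _ _)
  have hcover : T = {x ∈ T | ∃ y ∈ C 0, PhaseEq x y} ∪ ({x ∈ T | ∃ y ∈ C 1, PhaseEq x y} ∪
      ({x ∈ T | ∃ y ∈ C 2, PhaseEq x y} ∪ ({x ∈ T | ∃ y ∈ C 3, PhaseEq x y} ∪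
      {x ∈ T | ∃ y ∈ C 4, PhaseEq x y}))) := by
    apply Set.Subset.antisymm
    · intro x hx
      obtain ⟨i, y, hy, hxy⟩ := hsub x hx
      fin_cases i
      · exact Or.inl ⟨hx, y, hy, hxy⟩
      · exact Or.inr (Or.inl ⟨hx, y, hy, hxy⟩)
      · exact Or.inr (Or.inr (Or.inl ⟨hx, y, hy, hxy⟩))
      · exact Or.inr (Or.inr (Or.inr (Or.inl ⟨hx, y, hy, hxy⟩)))
      · exact Or.inr (Or.inr (Or.inr (Or.inr ⟨hx, y, hy, hxy⟩)))
    · intro x hx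
      rcases hx with h|h|h|h|h <;> exact h.1
  have hsum7 : ({x ∈ T | ∃ y ∈ C 0, PhaseEq x y}).ncard +
      ({x ∈ T | ∃ y ∈ C 1, PhaseEq x y}).ncard + ({x ∈ T | ∃ y ∈ C 2, PhaseEq x y}).ncard +
      ({x ∈ T | ∃ y ∈ C 3, PhaseEq x y}).ncard + ({x ∈ T | ∃ y ∈ C 4, PhaseEq x y}).ncard = 7 := by
    have h7 : T.ncard = 7 := by rw [hT.2.1]; norm_num
    rw [hcover] at h7
    rw [Set.ncard_union_eq (Set.disjoint_union_right.2 ⟨hpairwise 0 1 (by decide),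
        Set.disjoint_union_right.2 ⟨hpairwise 0 2 (by decide),
        Set.disjoint_union_right.2 ⟨hpairwise 0 3 (by decide), hpairwise 0 4 (by decide)⟩⟩⟩)
        (hfinS 0) (((hfinS 1).union ((hfinS 2).union ((hfinS 3).union (hfinS 4)))))] at h7
    rw [Set.ncard_union_eq (Set.disjoint_union_right.2 ⟨hpairwise 1 2 (by decide),
        Set.disjoint_union_right.2 ⟨hpairwise 1 3 (by decide), hpairwise 1 4 (by decide)⟩⟩)
        (hfinS 1) (((hfinS 2).union ((hfinS 3).union (hfinS 4))))] at h7
    rw [Set.ncard_union_eq (Set.disjoint_union_right.2 ⟨hpairwise 2 3 (by decide),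
        hpairwise 2 4 (by decide)⟩) (hfinS 2) ((hfinS 3).union (hfinS 4))] at h7
    rw [Set.ncard_union_eq (hpairwise 3 4 (by decide)) (hfinS 3) (hfinS 4)] at h7
    omega
  obtain ⟨i0, hi3, hi1⟩ := count_lemma (fun i => ({x ∈ T | ∃ y ∈ C i, PhaseEq x y}).ncard)
    (by simpa using hsum7) hval h33
  constructor
  · refine ⟨i0, ⟨hi3, hi1⟩, ?_⟩
    rintro j ⟨hj3, hj1⟩
    by_contra hji
    have := hi1 j hji
    omega
  · rintro i ⟨h3, -⟩
    obtain ⟨U, V, Wm, hUVne, hUWne, hVWne, hSet⟩ := Set.ncard_eq_three.1 h3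
    refine ⟨U, V, Wm, hSet, ?_⟩
    have hUmem : U ∈ {x ∈ T | ∃ y ∈ C i, PhaseEq x y} := by rw [hSet]; left; rfl
    have hVmem : V ∈ {x ∈ T | ∃ y ∈ C i, PhaseEq x y} := by rw [hSet]; right; left; rfl
    have hWmem : Wm ∈ {x ∈ T | ∃ y ∈ C i, PhaseEq x y} := by rw [hSet]; right; right; rfl
    have hUT : U ∈ T := hUmem.1
    have hVT : V ∈ T := hVmem.1
    have hWT' : Wm ∈ T := hWmem.1
    have hDi : _root_.vec '' {x ∈ T | ∃ y ∈ C i, PhaseEq x y} =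
        ((Submodule.span (ZMod 2) (_root_.vec '' T) ⊓ Submodule.span (ZMod 2) (_root_.vec '' (C i)) :
          Submodule (ZMod 2) PV) : Set PV) \ {0} := by rw [hSim i, hint i]
    have hu : _root_.vec U ∈ ((Submodule.span (ZMod 2) (_root_.vec '' T) ⊓
        Submodule.span (ZMod 2) (_root_.vec '' (C i)) : Submodule (ZMod 2) PV) : Set PV) \ {0} := by
      rw [← hDi]; exact ⟨U, hUmem, rfl⟩
    have hv : _root_.vec V ∈ ((Submodule.span (ZMod 2) (_root_.vec '' T) ⊓
        Submodule.span (ZMod 2) (_root_.vec '' (C i)) : Submodule (ZMod 2) PV) : Set PV) \ {0} := by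
      rw [← hDi]; exact ⟨V, hVmem, rfl⟩
    have hchar : ∀ a : ZMod 2, a + a = 0 := by decide
    have haddself : ∀ w : PV, w + w = 0 := by
      intro w; funext j
      exact Prod.ext (by rw [Pi.add_apply, Prod.fst_add]; exact hchar _)
        (by rw [Pi.add_apply, Prod.snd_add]; exact hchar _)
    have hadd : _root_.vec U + _root_.vec V ∈ ((Submodule.span (ZMod 2) (_root_.vec '' T) ⊓
        Submodule.span (ZMod 2) (_root_.vec '' (C i)) : Submodule (ZMod 2) PV) : Set PV) \ {0} := by
      refine ⟨Submodule.add_mem _ hu.1 hv.1, ?_⟩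
      intro h0
      rw [Set.mem_singleton_iff] at h0
      have hUV : _root_.vec U = _root_.vec V := by
        calc _root_.vec U = _root_.vec U + (_root_.vec V + _root_.vec V) := by rw [haddself, add_zero]
        _ = (_root_.vec U + _root_.vec V) + _root_.vec V := by rw [add_assoc]
        _ = _root_.vec V := by rw [h0, zero_add]
      exact hUVne (vec_inj U V (hTpauli U hUT) (hTpauli V hVT) hUV)
    rw [← hDi] at hadd
    obtain ⟨x, hxmem, hxval⟩ := hadd
    have hxT : x ∈ T := hxmem.1
    rw [hSet] at hxmem
    have hwm : _root_.vec Wm = _root_.vec U + _root_.vec V := by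
      rcases hxmem with rfl | rfl | rfl
      · exact absurd (left_eq_add.1 hxval)
          (vec_ne_zero V (hTpauli V hVT) (hT.2.2.1 V hVT).2)
      · exact absurd (right_eq_add.1 hxval)
          (vec_ne_zero U (hTpauli U hUT) (hT.2.2.1 U hUT).2)
      · exact hxval
    obtain ⟨P, hPp, hPv, c, hc0, hUVc⟩ := mul_pauli U V (hTpauli U hUT) (hTpauli V hVT)
    have hWP : Wm = P := vec_inj _ _ (hTpauli Wm hWT') hPp (by rw [hwm, hPv])
    exact ⟨c⁻¹, inv_ne_zero hc0, by rw [hUVc, ← hWP, smul_smul, inv_mul_cancel₀ hc0, one_smul]⟩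
end MainProof
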